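/- The system of four similarities of ratio 1/2 forming a zipper with vertices (0,0), (0,1/2), (1/2,1/2), (1,1/2), (1,0) and signature (1,0,0,1) has attractor equal to the square [0,1] × [0,1]. -/

import Mathlib

open Set

/-- `K` is the attractor (invariant nonempty compact set) of the system `S`. -/
def IsAttractor {X : Type*} [MetricSpace X] {m : ℕ} (S : Fin m → X → X) (K : Set X) : Prop :=
  K.Nonempty ∧ IsCompact K ∧ K = ⋃ i, S i '' K

/-- `S` is a zipper with vertices `z 0, …, z m` and signature `ε ∈ {0,1}^m`:
a system of injective contractions with `S j (z 0) = z (j + ε j)` and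
`S j (z m) = z (j + 1 - ε j)` (0-based indexing of the maps). -/
def IsZipper {X : Type*} [MetricSpace X] {m : ℕ} (S : Fin m → X → X)
    (z : ℕ → X) (ε : Fin m → ℕ) : Prop :=
  (∀ j, ε j ≤ 1) ∧
  (∀ j, Function.Injective (S j)) ∧
  (∀ j, ∃ r : NNReal, ContractingWith r (S j)) ∧
  (∀ j : Fin m, S j (z 0) = z (j.val + ε j)) ∧
  (∀ j : Fin m, S j (z m) = z (j.val + 1 - ε j))

/-- The affine maps `T i` of the zipper `S_{P,ε}` on `[0,1]` associated to a
partition `x` and signature `ε`. -/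
def zipT {m : ℕ} (x : ℕ → ℝ) (ε : Fin m → ℕ) (i : Fin m) : ℝ → ℝ :=
  fun t => x (i.val + ε i) * (1 - t) + x (i.val + 1 - ε i) * t
/-- Vertices of the square-filling zipper: `(0,0)`, `(0,1/2)`, `(1/2,1/2)`,
`(1,1/2)`, `(1,0)`, in the plane `ℝ² ≃ ℂ`. -/
noncomputable def sqVert : ℕ → ℂ
  | 0 => 0
  | 1 => Complex.I / 2
  | 2 => 1 / 2 + Complex.I / 2
  | 3 => 1 + Complex.I / 2
  | _ => 1

/-- The four similarities of ratio `1/2` (with the appropriate orientations)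
forming a zipper with vertices `sqVert` and signature `(1,0,0,1)`. -/
noncomputable def sqZip : Fin 4 → ℂ → ℂ :=
  ![fun w => -Complex.I * w / 2 + Complex.I / 2,
    fun w => w / 2 + Complex.I / 2,
    fun w => w / 2 + (1 / 2 + Complex.I / 2),
    fun w => Complex.I * w / 2 + 1]

lemma sq_half (c : ℂ) (hc : ‖c‖ = 1/2) (b p q : ℂ) :
    dist (c*p + b) (c*q + b) = dist p q / 2 := by
  rw [Complex.dist_eq, Complex.dist_eq, show c*p+b - (c*q+b) = c*(p-q) by ring, norm_mul, hc]
  ring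

lemma sq_habs : ∀ i, ∀ p q : ℂ, dist (sqZip i p) (sqZip i q) = dist p q / 2 := by
  intro i p q
  fin_cases i
  · show dist (-Complex.I * p / 2 + Complex.I / 2) (-Complex.I * q / 2 + Complex.I / 2) = _
    rw [show -Complex.I*p/2 + Complex.I/2 = (-Complex.I/2)*p + Complex.I/2 by ring,
        show -Complex.I*q/2 + Complex.I/2 = (-Complex.I/2)*q + Complex.I/2 by ring]
    exact sq_half _ (by simp [Complex.norm_I]) _ p q
  · show dist (p / 2 + Complex.I / 2) (q / 2 + Complex.I / 2) = _
    rw [show p/2 + Complex.I/2 = (1/2:ℂ)*p + Complex.I/2 by ring,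
        show q/2 + Complex.I/2 = (1/2:ℂ)*q + Complex.I/2 by ring]
    exact sq_half _ (by norm_num) _ p q
  · show dist (p / 2 + (1/2 + Complex.I / 2)) (q / 2 + (1/2 + Complex.I / 2)) = _
    rw [show p/2 + (1/2 + Complex.I/2) = (1/2:ℂ)*p + (1/2 + Complex.I/2) by ring,
        show q/2 + (1/2 + Complex.I/2) = (1/2:ℂ)*q + (1/2 + Complex.I/2) by ring]
    exact sq_half _ (by norm_num) _ p q
  · show dist (Complex.I * p / 2 + 1) (Complex.I * q / 2 + 1) = _
    rw [show Complex.I*p/2 + 1 = (Complex.I/2)*p + 1 by ring,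
        show Complex.I*q/2 + 1 = (Complex.I/2)*q + 1 by ring]
    exact sq_half _ (by simp [Complex.norm_I]) _ p q

lemma sq_re_im0 (p : ℂ) : (sqZip 0 p).re = p.im/2 ∧ (sqZip 0 p).im = (1 - p.re)/2 := by
  constructor <;> simp [sqZip, Complex.div_re, Complex.div_im, Complex.normSq] <;> ring

lemma sq_re_im1 (p : ℂ) : (sqZip 1 p).re = p.re/2 ∧ (sqZip 1 p).im = (1 + p.im)/2 := by
  constructor <;> simp [sqZip, Complex.div_re, Complex.div_im, Complex.normSq] <;> ring

lemma sq_re_im2 (p : ℂ) : (sqZip 2 p).re = (1+p.re)/2 ∧ (sqZip 2 p).im = (1 + p.im)/2 := by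
  constructor <;> simp [sqZip, Complex.div_re, Complex.div_im, Complex.normSq] <;> ring

lemma sq_re_im3 (p : ℂ) : (sqZip 3 p).re = 1 - p.im/2 ∧ (sqZip 3 p).im = p.re/2 := by
  constructor <;> simp [sqZip, Complex.div_re, Complex.div_im, Complex.normSq] <;> ring

lemma sq_inv0 (w : ℂ) : sqZip 0 (1 + 2*Complex.I*w) = w := by
  simp only [sqZip, Matrix.cons_val_zero]
  linear_combination (-w) * Complex.I_sq

lemma sq_inv1 (w : ℂ) : sqZip 1 (2*w - Complex.I) = w := by
  simp only [sqZip, Matrix.cons_val_one, Matrix.head_cons, Matrix.cons_val_zero]; ring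

lemma sq_inv2 (w : ℂ) : sqZip 2 (2*w - 1 - Complex.I) = w := by
  simp only [sqZip, Matrix.cons_val_two, Matrix.tail_cons, Matrix.head_cons]; ring

lemma sq_inv3 (w : ℂ) : sqZip 3 (-2*Complex.I*w + 2*Complex.I) = w := by
  simp only [sqZip, Matrix.cons_val_three, Matrix.tail_cons, Matrix.head_cons]
  linear_combination (1-w) * Complex.I_sq

/-- The system of four similarities of ratio `1/2` forming a zipper with
vertices `(0,0),(0,1/2),(1/2,1/2),(1,1/2),(1,0)` and signature `(1,0,0,1)`
has attractor equal to the square `[0,1] × [0,1]`. -/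
theorem stmt7 :
    (∀ i, ∀ p q : ℂ, dist (sqZip i p) (sqZip i q) = dist p q / 2) ∧
    IsZipper sqZip sqVert ![1, 0, 0, 1] ∧
    IsAttractor sqZip {w : ℂ | w.re ∈ Icc (0:ℝ) 1 ∧ w.im ∈ Icc (0:ℝ) 1} := by
  refine ⟨sq_habs, ⟨?_, ?_, ?_, ?_, ?_⟩, ?_, ?_, ?_⟩
  · intro j; fin_cases j <;> norm_num
  · intro j p q h
    have h2 := sq_habs j p q
    rw [h, dist_self] at h2
    have : dist p q = 0 := by linarith
    exact eq_of_dist_eq_zero this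
  · intro j
    refine ⟨1/2, by rw [← NNReal.coe_lt_coe]; norm_num, LipschitzWith.of_dist_le_mul fun p q => ?_⟩
    rw [sq_habs]
    push_cast
    linarith [dist_nonneg (x := p) (y := q)]
  · intro j; fin_cases j <;> norm_num [sqZip, sqVert] <;> ring
  · intro j; fin_cases j <;> norm_num [sqZip, sqVert] <;> ring
  · exact ⟨0, by norm_num⟩
  · apply Metric.isCompact_of_isClosed_isBounded
    · have : {w : ℂ | w.re ∈ Icc (0:ℝ) 1 ∧ w.im ∈ Icc (0:ℝ) 1}
          = Complex.re ⁻¹' Icc (0:ℝ) 1 ∩ Complex.im ⁻¹' Icc (0:ℝ) 1 := rfl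
      rw [this]
      exact (isClosed_Icc.preimage Complex.continuous_re).inter
        (isClosed_Icc.preimage Complex.continuous_im)
    · apply (Metric.isBounded_closedBall (x := (0:ℂ)) (r := 2)).subset
      rintro w ⟨⟨h1, h2⟩, h3, h4⟩
      rw [Metric.mem_closedBall, Complex.dist_eq, sub_zero]
      calc ‖w‖ ≤ |w.re| + |w.im| := Complex.norm_le_abs_re_add_abs_im w
        _ ≤ 2 := by rw [abs_of_nonneg h1, abs_of_nonneg h3]; linarith
  · ext w
    simp only [mem_setOf_eq, mem_Icc, mem_iUnion, mem_image]
    constructor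
    · rintro ⟨⟨hx0, hx1⟩, hy0, hy1⟩
      by_cases hx : w.re ≤ 1/2 <;> by_cases hy : w.im ≤ 1/2
      · refine ⟨0, 1 + 2*Complex.I*w, ⟨⟨?_, ?_⟩, ?_, ?_⟩, sq_inv0 w⟩ <;> simp <;> linarith
      · refine ⟨1, 2*w - Complex.I, ⟨⟨?_, ?_⟩, ?_, ?_⟩, sq_inv1 w⟩ <;> simp <;> linarith
      · refine ⟨3, -2*Complex.I*w + 2*Complex.I, ⟨⟨?_, ?_⟩, ?_, ?_⟩, sq_inv3 w⟩ <;>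
          simp <;> linarith
      · refine ⟨2, 2*w - 1 - Complex.I, ⟨⟨?_, ?_⟩, ?_, ?_⟩, sq_inv2 w⟩ <;> simp <;> linarith
    · rintro ⟨i, p, ⟨⟨h1, h2⟩, h3, h4⟩, rfl⟩
      fin_cases i
      · obtain ⟨e1, e2⟩ := sq_re_im0 p
        refine ⟨⟨?_, ?_⟩, ?_, ?_⟩ <;> rw [show ((⟨0, by norm_num⟩ : Fin 4) = 0) from rfl] <;>
          first | (rw [e1]; linarith) | (rw [e2]; linarith)
      · obtain ⟨e1, e2⟩ := sq_re_im1 p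
        refine ⟨⟨?_, ?_⟩, ?_, ?_⟩ <;> rw [show ((⟨1, by norm_num⟩ : Fin 4) = 1) from rfl] <;>
          first | (rw [e1]; linarith) | (rw [e2]; linarith)
      · obtain ⟨e1, e2⟩ := sq_re_im2 p
        refine ⟨⟨?_, ?_⟩, ?_, ?_⟩ <;> rw [show ((⟨2, by norm_num⟩ : Fin 4) = 2) from rfl] <;>
          first | (rw [e1]; linarith) | (rw [e2]; linarith)
      · obtain ⟨e1, e2⟩ := sq_re_im3 p
        refine ⟨⟨?_, ?_⟩, ?_, ?_⟩ <;> rw [show ((⟨3, by norm_num⟩ : Fin 4) = 3) from rfl] <;>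
          first | (rw [e1]; linarith) | (rw [e2]; linarith)
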